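/- In a group G, for s,t ∈ G we have s ∼_s t if and only if st⁻¹ belongs to the commutator subgroup [G,G]. Moreover s ∼_s t if and only if s ∼_s^1 t. -/

import Mathlib

/-- `s ∼ₛ¹ t`: `s = p₁⋯pₙ` and `t = p_{f(1)}⋯p_{f(n)}` for some `p_i ∈ S¹` and a
permutation `f` of `{1,…,n}` (encoded as a list permutation). -/
def SimS1 {S : Type*} [Semigroup S] (s t : S) : Prop :=
  ∃ l l' : List (WithOne S), l.Perm l' ∧ (s : WithOne S) = l.prod ∧ (t : WithOne S) = l'.prod

/-- `∼ₛ`: the transitive closure of `∼ₛ¹`. -/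
def SimS {S : Type*} [Semigroup S] : S → S → Prop := Relation.TransGen SimS1

section aux

variable {G : Type*} [Group G]

lemma simS1_mul_of_mem_commutator {c : G} (hc : c ∈ commutator G) (t : G) :
    SimS1 (c * t) t := by
  rw [commutator_eq_closure] at hc
  have hc' : c ∈ Submonoid.closure (commutatorSet G ∪ (commutatorSet G)⁻¹) := by
    rw [← Subgroup.closure_toSubmonoid]; exact hc
  obtain ⟨L, hL, hprod⟩ := Submonoid.exists_list_of_mem_closure hc'
  subst hprod
  clear hc hc'
  induction L with
  | nil =>
    exact ⟨[(t : WithOne G)], [(t : WithOne G)], List.Perm.refl _, by simp, by simp⟩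
  | cons a L ih =>
    obtain ⟨l, l', hperm, hl, hl'⟩ := ih (fun y hy => hL y (List.mem_cons_of_mem a hy))
    have ha : a ∈ commutatorSet G := by
      rcases hL a List.mem_cons_self with h | h
      · exact h
      · obtain ⟨g, h', hg⟩ := h
        exact ⟨h', g, by rw [← inv_inv a, ← hg, commutatorElement_inv]⟩
    obtain ⟨g, h, rfl⟩ := ha
    refine ⟨[(g : WithOne G), h, (g⁻¹ : G), (h⁻¹ : G)] ++ l,
      [(g : WithOne G), (g⁻¹ : G), h, (h⁻¹ : G)] ++ l', ?_, ?_, ?_⟩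
    · exact List.Perm.append (List.Perm.cons _ (List.Perm.swap _ _ _)) hperm
    · rw [List.prod_append]
      simp only [List.prod_cons, List.prod_nil, mul_one, ← hl, ← WithOne.coe_mul,
        commutatorElement_def, WithOne.coe_inj]
      group
    · rw [List.prod_append]
      simp only [List.prod_cons, List.prod_nil, mul_one, ← hl', ← WithOne.coe_mul,
        WithOne.coe_inj]
      group

lemma simS1_of_mul_mem_commutator {s t : G} (h : s * t⁻¹ ∈ commutator G) : SimS1 s t := by
  have := simS1_mul_of_mem_commutator h t
  rwa [inv_mul_cancel_right] at this

lemma mul_mem_commutator_of_simS1 {s t : G} (h : SimS1 s t) : s * t⁻¹ ∈ commutator G := by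
  obtain ⟨l, l', hperm, hl, hl'⟩ := h
  let φ : WithOne G →* Abelianization G :=
    WithOne.lift (Abelianization.of : G →* Abelianization G).toMulHom
  have key : φ s = φ t := by
    rw [hl, hl', map_list_prod, map_list_prod]
    exact (hperm.map φ).prod_eq
  have hst : Abelianization.of s = Abelianization.of t := by
    simpa [φ, WithOne.lift_coe] using key
  have h1 : Abelianization.of (s * t⁻¹) = 1 := by
    rw [map_mul, map_inv, hst, mul_inv_cancel]
  exact (QuotientGroup.eq_one_iff _).mp h1

end aux

/-- In a group `G`: `s ∼ₛ t` iff `s * t⁻¹ ∈ [G,G]`, and `s ∼ₛ t` iff `s ∼ₛ¹ t`. -/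
theorem group_simS_iff_commutator {G : Type*} [Group G] (s t : G) :
    (SimS s t ↔ s * t⁻¹ ∈ commutator G) ∧ (SimS s t ↔ SimS1 s t) := by
  have forward : ∀ s t : G, SimS s t → s * t⁻¹ ∈ commutator G := by
    intro s t h
    induction h with
    | single h1 => exact mul_mem_commutator_of_simS1 h1
    | tail _ h1 ih =>
      have h2 := mul_mem_commutator_of_simS1 h1
      have := mul_mem ih h2
      simpa [mul_assoc] using this
  constructor
  · exact ⟨forward s t, fun h => Relation.TransGen.single (simS1_of_mul_mem_commutator h)⟩
  · exact ⟨fun h => simS1_of_mul_mem_commutator (forward s t h),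
      fun h => Relation.TransGen.single h⟩
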